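/- Strassen's decomposition has a cyclic ℤ₃ symmetry and an internal ℤ₂ symmetry: (1) the cyclic shift κ (induced by x⊗y⊗z ↦ z⊗x⊗y) maps the seven-element Strassen set S = {T₁,…,T₇} bijectively onto itself, fixing T₁ and cyclically permuting {T₂,T₃,T₄} and {T₅,T₆,T₇}; (2) with s := [[0,1],[1,0]], the map induced by x⊗y⊗z ↦ (s x s) ⊗ (s y s) ⊗ (s z s) maps S bijectively onto itself, fixing T₁ and exchanging the triple {T₂,T₃,T₄} with the triple {T₅,T₆,T₇}. -/

import Mathlib

open scoped TensorProduct
open Matrix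

noncomputable section

abbrev M2 := Matrix (Fin 2) (Fin 2) ℂ
abbrev W2 := M2 ⊗[ℂ] (M2 ⊗[ℂ] M2)

/-- matrix units -/
def E (i j : Fin 2) : M2 := single i j 1

def T1 : W2 := (1 : M2) ⊗ₜ[ℂ] ((1 : M2) ⊗ₜ[ℂ] (1 : M2))
def T2 : W2 := E 0 0 ⊗ₜ[ℂ] ((E 0 1 - E 1 1) ⊗ₜ[ℂ] (E 1 0 + E 1 1))
def T3 : W2 := (E 1 0 + E 1 1) ⊗ₜ[ℂ] (E 0 0 ⊗ₜ[ℂ] (E 0 1 - E 1 1))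
def T4 : W2 := (E 0 1 - E 1 1) ⊗ₜ[ℂ] ((E 1 0 + E 1 1) ⊗ₜ[ℂ] E 0 0)
def T5 : W2 := E 1 1 ⊗ₜ[ℂ] ((E 1 0 - E 0 0) ⊗ₜ[ℂ] (E 0 0 + E 0 1))
def T6 : W2 := (E 0 0 + E 0 1) ⊗ₜ[ℂ] (E 1 1 ⊗ₜ[ℂ] (E 1 0 - E 0 0))
def T7 : W2 := (E 1 0 - E 0 0) ⊗ₜ[ℂ] ((E 0 0 + E 0 1) ⊗ₜ[ℂ] E 1 1)

/-- the Strassen set -/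
def StrassenSet : Set W2 := {T1, T2, T3, T4, T5, T6, T7}

def s : M2 := !![0, 1; 1, 0]

lemma conj_one : s * 1 * s = 1 := by
  ext i j
  fin_cases i <;> fin_cases j <;>
    simp [s, Matrix.mul_apply, Fin.sum_univ_succ, Matrix.one_apply,
      Matrix.vecHead, Matrix.vecTail]

lemma conj_a : s * E 0 0 * s = E 1 1 := by
  ext i j
  fin_cases i <;> fin_cases j <;>
    simp [s, E, Matrix.mul_apply, Fin.sum_univ_succ, Matrix.single,
      Matrix.vecHead, Matrix.vecTail]

lemma conj_a' : s * E 1 1 * s = E 0 0 := by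
  ext i j
  fin_cases i <;> fin_cases j <;>
    simp [s, E, Matrix.mul_apply, Fin.sum_univ_succ, Matrix.single,
      Matrix.vecHead, Matrix.vecTail]

lemma conj_b : s * (E 0 1 - E 1 1) * s = E 1 0 - E 0 0 := by
  ext i j
  fin_cases i <;> fin_cases j <;>
    simp [s, E, Matrix.mul_apply, Fin.sum_univ_succ, Matrix.single,
      Matrix.vecHead, Matrix.vecTail]

lemma conj_b' : s * (E 1 0 - E 0 0) * s = E 0 1 - E 1 1 := by
  ext i j
  fin_cases i <;> fin_cases j <;>
    simp [s, E, Matrix.mul_apply, Fin.sum_univ_succ, Matrix.single,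
      Matrix.vecHead, Matrix.vecTail]

lemma conj_c : s * (E 1 0 + E 1 1) * s = E 0 0 + E 0 1 := by
  ext i j
  fin_cases i <;> fin_cases j <;>
    simp [s, E, Matrix.mul_apply, Fin.sum_univ_succ, Matrix.single,
      Matrix.vecHead, Matrix.vecTail]

lemma conj_c' : s * (E 0 0 + E 0 1) * s = E 1 0 + E 1 1 := by
  ext i j
  fin_cases i <;> fin_cases j <;>
    simp [s, E, Matrix.mul_apply, Fin.sum_univ_succ, Matrix.single,
      Matrix.vecHead, Matrix.vecTail]

/-- Strassen's decomposition has a cyclic ℤ₃ symmetry and an internal ℤ₂ symmetry. -/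
theorem strassen_Z3_and_internal_Z2
    (κ : W2 →ₗ[ℂ] W2)
    (hκ : ∀ x y z : M2, κ (x ⊗ₜ[ℂ] (y ⊗ₜ[ℂ] z)) = z ⊗ₜ[ℂ] (x ⊗ₜ[ℂ] y))
    (Φ : W2 →ₗ[ℂ] W2)
    (hΦ : ∀ x y z : M2,
      Φ (x ⊗ₜ[ℂ] (y ⊗ₜ[ℂ] z)) = (s * x * s) ⊗ₜ[ℂ] ((s * y * s) ⊗ₜ[ℂ] (s * z * s))) :
    (⇑κ '' StrassenSet = StrassenSet ∧
      κ T1 = T1 ∧ κ T2 = T3 ∧ κ T3 = T4 ∧ κ T4 = T2 ∧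
      κ T5 = T6 ∧ κ T6 = T7 ∧ κ T7 = T5) ∧
    (⇑Φ '' StrassenSet = StrassenSet ∧ Φ T1 = T1 ∧
      ⇑Φ '' ({T2, T3, T4} : Set W2) = ({T5, T6, T7} : Set W2) ∧
      ⇑Φ '' ({T5, T6, T7} : Set W2) = ({T2, T3, T4} : Set W2)) := by
  have k1 : κ T1 = T1 := hκ 1 1 1
  have k2 : κ T2 = T3 := hκ _ _ _
  have k3 : κ T3 = T4 := hκ _ _ _
  have k4 : κ T4 = T2 := hκ _ _ _
  have k5 : κ T5 = T6 := hκ _ _ _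
  have k6 : κ T6 = T7 := hκ _ _ _
  have k7 : κ T7 = T5 := hκ _ _ _
  have p1 : Φ T1 = T1 := by
    rw [T1, hΦ, conj_one]
  have p2 : Φ T2 = T5 := by
    rw [T2, hΦ, conj_a, conj_b, conj_c]; rfl
  have p3 : Φ T3 = T6 := by
    rw [T3, hΦ, conj_a, conj_b, conj_c]; rfl
  have p4 : Φ T4 = T7 := by
    rw [T4, hΦ, conj_a, conj_b, conj_c]; rfl
  have p5 : Φ T5 = T2 := by
    rw [T5, hΦ, conj_a', conj_b', conj_c']; rfl
  have p6 : Φ T6 = T3 := by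
    rw [T6, hΦ, conj_a', conj_b', conj_c']; rfl
  have p7 : Φ T7 = T4 := by
    rw [T7, hΦ, conj_a', conj_b', conj_c']; rfl
  refine ⟨⟨?_, k1, k2, k3, k4, k5, k6, k7⟩, ?_, p1, ?_, ?_⟩
  · rw [StrassenSet]
    simp only [Set.image_insert_eq, Set.image_singleton, k1, k2, k3, k4, k5, k6, k7]
    ext x; simp; tauto
  · rw [StrassenSet]
    simp only [Set.image_insert_eq, Set.image_singleton, p1, p2, p3, p4, p5, p6, p7]
    ext x; simp; tauto
  · simp only [Set.image_insert_eq, Set.image_singleton, p2, p3, p4]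
  · simp only [Set.image_insert_eq, Set.image_singleton, p5, p6, p7]
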